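/- Let l be a prime, G a commutative group, and σ : G ≃* G a group automorphism with σ^l = id. Write tr : ℤ[G] → ℤ[G] for the ℤ-linear trace map sending a basis element [g] to ∑_{i=0}^{l-1} [σ^i(g)], and T for the image of tr (an ideal of ℤ[G]). Then for every g ∈ G there exists y ∈ T such that (∑_{i=0}^{l-1} [σ^i(g)])^l − ∑_{i=0}^{l-1} [σ^i(g^l)] + l·[∏_{i=0}^{l-1} σ^i(g)] = l·y. (This is Lemma 6 of the paper: (tr_A g')^l − tr_A(g'^l) ≡ −l·g'^Â mod l·T'.) -/

import Mathlib

open MonoidAlgebra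

@[to_additive]
private lemma zmod_prod_val {l : ℕ} [NeZero l] {M : Type*} [CommMonoid M] (f : ℕ → M) :
    ∏ i : ZMod l, f (ZMod.val i) = ∏ i ∈ Finset.range l, f i :=
  Finset.prod_nbij' (fun a => ZMod.val a) (fun a => (a : ZMod l))
    (fun a _ => Finset.mem_range.2 (ZMod.val_lt a))
    (fun _ _ => Finset.mem_univ _)
    (fun a _ => ZMod.natCast_zmod_val a)
    (fun a ha => ZMod.val_cast_of_lt (Finset.mem_range.1 ha))
    (fun _ _ => rfl)

/-- **Lemma 6 of the paper.**  For a prime `l`, a commutative group `G` and an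
automorphism `σ` of `G` with `σ ^ l = 1`, let `tr` be the ℤ-linear trace map on the
group ring `ℤ[G]` sending the basis element `[g]` to `∑_{i=0}^{l-1} [σ^i g]`, and let
`T = range tr`.  Then `(tr g)^l - tr (g^l) + l·[∏_i σ^i g] = l·y` for some `y ∈ T`. -/
theorem stmt0 (l : ℕ) (hl : l.Prime) (G : Type*) [CommGroup G]
    (σ : MulAut G) (hσ : σ ^ l = 1)
    (tr : MonoidAlgebra ℤ G →ₗ[ℤ] MonoidAlgebra ℤ G)
    (htr : ∀ g : G, tr (of ℤ G g) = ∑ i ∈ Finset.range l, of ℤ G ((σ ^ i) g))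
    (g : G) :
    ∃ y ∈ LinearMap.range tr,
      (∑ i ∈ Finset.range l, of ℤ G ((σ ^ i) g)) ^ l
        - (∑ i ∈ Finset.range l, of ℤ G ((σ ^ i) (g ^ l)))
        + (l : ℤ) • of ℤ G (∏ i ∈ Finset.range l, (σ ^ i) g)
      = (l : ℤ) • y := by
  classical
  haveI : Fact l.Prime := ⟨hl⟩
  haveI : NeZero l := ⟨hl.ne_zero⟩
  haveI : Fact (1 < l) := ⟨hl.one_lt⟩
  have hl0 : l ≠ 0 := hl.ne_zero
  -- powers of σ only matter mod l
  have hpow : ∀ a : ℕ, σ ^ a = σ ^ (a % l) := by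
    intro a
    conv_lhs => rw [← Nat.div_add_mod a l]
    rw [pow_add, pow_mul, hσ, one_pow, one_mul]
  have hvadd : ∀ a b : ZMod l, ∀ x : G,
      (σ ^ (a + b).val) x = (σ ^ b.val) ((σ ^ a.val) x) := by
    intro a b x
    rw [add_comm a b, ZMod.val_add, ← hpow, pow_add, MulAut.mul_apply]
  -- the group element attached to an exponent pattern
  set H : (ZMod l → ℕ) → G := fun k => ∏ i : ZMod l, ((σ ^ (ZMod.val i)) g) ^ k i with hH
  set shift : ZMod l → (ZMod l → ℕ) → (ZMod l → ℕ) := fun c k i => k (i - c) with hshift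
  have hshift_add : ∀ (c d : ZMod l) k, shift d (shift c k) = shift (c + d) k := by
    intro c d k; funext i; simp only [hshift, sub_sub, add_comm d c]
  have hshift_zero : ∀ k, shift 0 k = k := by
    intro k; funext i; simp only [hshift, sub_zero]
  have hHshift : ∀ (c : ZMod l) (k : ZMod l → ℕ), H (shift c k) = (σ ^ c.val) (H k) := by
    intro c k
    have h1 : (σ ^ c.val) (H k) = ∏ i : ZMod l, ((σ ^ ((i + c).val)) g) ^ k i := by
      rw [hH, map_prod]
      exact Finset.prod_congr rfl fun i _ => by rw [map_pow, hvadd]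
    rw [h1, hH]
    refine Finset.prod_nbij' (fun a => a - c) (fun a => a + c)
      (fun _ _ => Finset.mem_univ _) (fun _ _ => Finset.mem_univ _)
      (fun a _ => sub_add_cancel a c) (fun a _ => add_sub_cancel_right a c) ?_
    intro a _
    simp only [hshift]
    rw [sub_add_cancel a c]
  have hmultshift : ∀ (c : ZMod l) (k : ZMod l → ℕ),
      Nat.multinomial Finset.univ (shift c k) = Nat.multinomial Finset.univ k := by
    intro c k
    unfold Nat.multinomial
    have e1 : ∑ i : ZMod l, shift c k i = ∑ i : ZMod l, k i := by
      simpa using Equiv.sum_comp (Equiv.subRight c) k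
    have e2 : ∏ i : ZMod l, Nat.factorial (shift c k i) = ∏ i : ZMod l, Nat.factorial (k i) := by
      simpa using Equiv.prod_comp (Equiv.subRight c) (fun x => Nat.factorial (k x))
    rw [e1, e2]
  -- the terms of the multinomial expansion
  set t : (ZMod l → ℕ) → MonoidAlgebra ℤ G :=
    fun k => (Nat.multinomial Finset.univ k : MonoidAlgebra ℤ G) * of ℤ G (H k) with ht
  set D := Finset.piAntidiag (Finset.univ : Finset (ZMod l)) l with hD
  set ones : ZMod l → ℕ := fun _ => 1 with hones
  -- expansion
  have hexp : (∑ i ∈ Finset.range l, of ℤ G ((σ ^ i) g)) ^ l = ∑ k ∈ D, t k := by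
    have h0 : (∑ i ∈ Finset.range l, of ℤ G ((σ ^ i) g))
        = ∑ i : ZMod l, of ℤ G ((σ ^ (ZMod.val i)) g) :=
      (zmod_sum_val (fun n => of ℤ G ((σ ^ n) g))).symm
    rw [h0, Finset.sum_pow_eq_sum_piAntidiag]
    refine Finset.sum_congr rfl fun k _ => ?_
    rw [ht]
    congr 1
    rw [hH]
    simp only
    rw [map_prod]
    exact Finset.prod_congr rfl fun i _ => (map_pow (of ℤ G) _ _).symm
  -- the "concentrated" terms give tr (g ^ l)
  have hCpart : ∑ k ∈ D.filter (fun k => ∃ i, k i = l), t k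
      = ∑ i ∈ Finset.range l, of ℤ G ((σ ^ i) (g ^ l)) := by
    have himg : D.filter (fun k => ∃ i, k i = l)
        = Finset.image (fun i : ZMod l => fun j => if j = i then l else 0) Finset.univ := by
      ext k
      simp only [Finset.mem_filter, Finset.mem_image, Finset.mem_univ, true_and, hD,
        Finset.mem_piAntidiag]
      constructor
      · rintro ⟨⟨hsum, -⟩, i, hi⟩
        have hsum' : ∑ x : ZMod l, k x = l := hsum
        refine ⟨i, ?_⟩
        funext j
        by_cases hj : j = i
        · subst hj; simp [hi]
        · have h0 : ∑ j ∈ Finset.univ.erase i, k j = 0 := by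
            have h1 := Finset.add_sum_erase Finset.univ k (Finset.mem_univ i)
            rw [hi, hsum'] at h1
            omega
          have := (Finset.sum_eq_zero_iff.mp h0) j
            (Finset.mem_erase.mpr ⟨hj, Finset.mem_univ j⟩)
          simp [hj, this]
      · rintro ⟨i, rfl⟩
        exact ⟨⟨by simp, fun _ _ => trivial⟩, i, if_pos rfl⟩
    have hinj : ∀ x ∈ (Finset.univ : Finset (ZMod l)), ∀ y ∈ Finset.univ,
        (fun j => if j = x then l else 0) = (fun j => if j = y then l else 0) → x = y := by
      intro x _ y _ h
      have := congrFun h x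
      simp only [if_pos rfl] at this
      by_contra hxy
      rw [if_neg hxy] at this
      exact hl0 this
    rw [himg, Finset.sum_image hinj]
    have hterm : ∀ i : ZMod l,
        t (fun j => if j = i then l else 0) = of ℤ G ((σ ^ i.val) (g ^ l)) := by
      intro i
      have hm : Nat.multinomial Finset.univ (fun j => if j = i then l else 0) = 1 := by
        unfold Nat.multinomial
        have h1 : ∑ j : ZMod l, (if j = i then l else 0) = l := by simp
        have h2 : ∏ j : ZMod l, Nat.factorial (if j = i then l else 0) = Nat.factorial l := by
          simp only [apply_ite Nat.factorial, Nat.factorial_zero]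
          simp [Finset.prod_ite_eq']
        rw [h1, h2, Nat.div_self (Nat.factorial_pos l)]
      have hHe : H (fun j => if j = i then l else 0) = (σ ^ i.val) (g ^ l) := by
        rw [hH]
        simp only
        have hj : ∀ j : ZMod l, ((σ ^ j.val) g) ^ (if j = i then l else 0)
            = (if j = i then ((σ ^ j.val) g) ^ l else 1) := fun j => by split <;> simp
        rw [Finset.prod_congr rfl fun j _ => hj j, Finset.prod_ite_eq']
        simp [map_pow]
      rw [ht]
      simp only
      rw [hm, hHe, Nat.cast_one, one_mul]
    rw [Finset.sum_congr rfl fun i _ => hterm i]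
    exact zmod_sum_val (fun n => of ℤ G ((σ ^ n) (g ^ l)))
  -- all-ones pattern facts
  have honesD : ones ∈ D := by
    rw [hD, Finset.mem_piAntidiag]
    refine ⟨?_, fun _ _ => Finset.mem_univ _⟩
    simp [hones, Finset.card_univ, ZMod.card]
  have honesnotC : ¬ ∃ i : ZMod l, ones i = l := by
    rintro ⟨i, hi⟩
    simp only [hones] at hi
    have := hl.one_lt
    omega
  have hHones : H ones = ∏ i ∈ Finset.range l, (σ ^ i) g := by
    rw [hH]
    simp only [hones, pow_one]
    exact zmod_prod_val (fun n => (σ ^ n) g)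
  have hmones : Nat.multinomial Finset.univ ones = Nat.factorial l := by
    unfold Nat.multinomial
    simp [hones, Finset.card_univ, ZMod.card]
  set B := (D.filter (fun k => ¬ ∃ i, k i = l)).erase ones with hB
  have honesmem : ones ∈ D.filter (fun k => ¬ ∃ i, k i = l) :=
    Finset.mem_filter.mpr ⟨honesD, honesnotC⟩
  have hsplit : ∑ k ∈ D, t k = (∑ k ∈ D.filter (fun k => ∃ i, k i = l), t k)
      + (t ones + ∑ k ∈ B, t k) := by
    rw [hB, ← Finset.sum_filter_add_sum_filter_not D (fun k => ∃ i, k i = l) t,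
      ← Finset.add_sum_erase _ t honesmem]
  -- divisibility of the multinomial coefficients on B
  have hdvd : ∀ k ∈ B, l ∣ Nat.multinomial Finset.univ k := by
    intro k hk
    obtain ⟨hkones, hkf⟩ := Finset.mem_erase.mp hk
    obtain ⟨hkD, hknotC⟩ := Finset.mem_filter.mp hkf
    rw [hD, Finset.mem_piAntidiag] at hkD
    have hksum : ∑ x : ZMod l, k x = l := hkD.1
    have hspec := Nat.multinomial_spec Finset.univ k
    rw [hksum] at hspec
    have hldvd : l ∣ (∏ i : ZMod l, Nat.factorial (k i)) * Nat.multinomial Finset.univ k := by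
      rw [hspec]; exact Nat.dvd_factorial hl.pos le_rfl
    rcases (Nat.Prime.dvd_mul hl).mp hldvd with h | h
    · exfalso
      obtain ⟨i, -, hi⟩ := (Nat.Prime.prime hl).exists_mem_finset_dvd h
      have hle : l ≤ k i := (Nat.Prime.dvd_factorial hl).mp hi
      have hki : k i ≤ l := by
        rw [← hksum]
        exact Finset.single_le_sum (fun _ _ => Nat.zero_le _) (Finset.mem_univ i)
      have : k i = l := le_antisymm hki hle
      exact hknotC ⟨i, this⟩
    · exact h
  -- the setoid whose classes are the orbits of the shift action
  let R : Setoid (ZMod l → ℕ) :=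
    ⟨fun k k' => ∃ c, shift c k = k',
     ⟨fun k => ⟨0, hshift_zero k⟩,
      fun {k k'} h => by
        obtain ⟨c, hc⟩ := h
        exact ⟨-c, by rw [← hc, hshift_add, add_neg_cancel, hshift_zero]⟩,
      fun {k k' k''} h h' => by
        obtain ⟨c, hc⟩ := h
        obtain ⟨d, hd⟩ := h'
        exact ⟨c + d, by rw [← hd, ← hc, hshift_add]⟩⟩⟩
  have hBstab : ∀ (c : ZMod l), ∀ k ∈ B, shift c k ∈ B := by
    intro c k hk
    obtain ⟨hkones, hkf⟩ := Finset.mem_erase.mp hk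
    obtain ⟨hkD, hknotC⟩ := Finset.mem_filter.mp hkf
    refine Finset.mem_erase.mpr ⟨?_, Finset.mem_filter.mpr ⟨?_, ?_⟩⟩
    · intro hcontra
      apply hkones
      funext j
      have h1 := congrFun hcontra (j + c)
      simp only [hshift, add_sub_cancel_right] at h1
      exact h1
    · rw [hD, Finset.mem_piAntidiag] at hkD ⊢
      refine ⟨?_, fun _ _ => Finset.mem_univ _⟩
      have h2 : ∑ i : ZMod l, shift c k i = ∑ i : ZMod l, k i := by
        simpa [hshift] using Equiv.sum_comp (Equiv.subRight c) k
      exact h2.trans hkD.1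
    · rintro ⟨i, hi⟩
      exact hknotC ⟨i - c, hi⟩
  have hfree : ∀ k ∈ B, ∀ d : ZMod l, shift d k = k → d = 0 := by
    intro k hk d hd
    by_contra hd0
    obtain ⟨hkones, hkf⟩ := Finset.mem_erase.mp hk
    obtain ⟨hkD, -⟩ := Finset.mem_filter.mp hkf
    rw [hD, Finset.mem_piAntidiag] at hkD
    have hper : ∀ i : ZMod l, k (i + d) = k i := by
      intro i
      have h1 := congrFun hd (i + d)
      simp only [hshift, add_sub_cancel_right] at h1
      exact h1.symm
    have hn : ∀ n : ℕ, k ((n : ZMod l) * d) = k 0 := by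
      intro n
      induction n with
      | zero => simp
      | succ n ih =>
        have h2 : ((n + 1 : ℕ) : ZMod l) * d = (n : ZMod l) * d + d := by push_cast; ring
        rw [h2, hper, ih]
    have hconst : ∀ i : ZMod l, k i = k 0 := by
      intro i
      have hi : ((i * d⁻¹).val : ZMod l) * d = i := by
        rw [ZMod.natCast_zmod_val, mul_assoc, inv_mul_cancel₀ hd0, mul_one]
      rw [← hi, hn]
    have hksum : ∑ x : ZMod l, k x = l := hkD.1
    have hlk : l * k 0 = l := by
      have h4 : ∑ x : ZMod l, k x = ∑ _x : ZMod l, k 0 :=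
        Finset.sum_congr rfl fun i _ => hconst i
      rw [hksum, Finset.sum_const, Finset.card_univ, ZMod.card, smul_eq_mul] at h4
      exact h4.symm
    have hk0 : k 0 = 1 := Nat.eq_of_mul_eq_mul_left hl.pos (by rw [hlk, Nat.mul_one])
    exact hkones (funext fun i => by rw [hconst i, hk0])
  -- each orbit sum is l • (an element of T)
  have horbit : ∀ q ∈ B.image (Quotient.mk R),
      ∃ y ∈ LinearMap.range tr,
        ∑ k ∈ B.filter (fun z => Quotient.mk R z = q), t k = (l : ℤ) • y := by
    intro q hq
    obtain ⟨k₀, hk₀, rfl⟩ := Finset.mem_image.mp hq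
    obtain ⟨m, hm⟩ := hdvd k₀ hk₀
    refine ⟨(m : ℤ) • tr (of ℤ G (H k₀)),
      Submodule.smul_mem _ _ (LinearMap.mem_range_self tr _), ?_⟩
    have hfilter : B.filter (fun z => Quotient.mk R z = Quotient.mk R k₀)
        = Finset.image (fun c : ZMod l => shift c k₀) Finset.univ := by
      ext y
      simp only [Finset.mem_filter, Finset.mem_image, Finset.mem_univ, true_and]
      constructor
      · rintro ⟨hyB, hyq⟩
        obtain ⟨c, hc⟩ := Quotient.eq''.mp hyq
        exact ⟨-c, by rw [← hc, hshift_add, add_neg_cancel, hshift_zero]⟩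
      · rintro ⟨c, rfl⟩
        refine ⟨hBstab c k₀ hk₀, Quotient.sound ?_⟩
        exact ⟨-c, by rw [hshift_add, add_neg_cancel, hshift_zero]⟩
    have hinj2 : ∀ a ∈ (Finset.univ : Finset (ZMod l)), ∀ b ∈ Finset.univ,
        shift a k₀ = shift b k₀ → a = b := by
      intro a _ b _ hab
      have h1 : shift (a + -b) k₀ = k₀ := by
        have h2 : shift (-b) (shift a k₀) = shift (-b) (shift b k₀) := by rw [hab]
        rw [hshift_add, hshift_add, add_neg_cancel, hshift_zero] at h2
        exact h2
      have h3 := hfree k₀ hk₀ (a + -b) h1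
      have : a - b = 0 := by rwa [sub_eq_add_neg]
      exact sub_eq_zero.mp this
    rw [hfilter, Finset.sum_image hinj2]
    have hterm : ∀ c : ZMod l, t (shift c k₀)
        = (Nat.multinomial Finset.univ k₀ : MonoidAlgebra ℤ G)
            * of ℤ G ((σ ^ c.val) (H k₀)) := by
      intro c
      rw [ht]
      simp only
      rw [hmultshift, hHshift]
    rw [Finset.sum_congr rfl fun c _ => hterm c, ← Finset.mul_sum]
    have hsum2 : ∑ c : ZMod l, of ℤ G ((σ ^ (ZMod.val c)) (H k₀)) = tr (of ℤ G (H k₀)) := by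
      rw [htr]
      exact zmod_sum_val (fun n => of ℤ G ((σ ^ n) (H k₀)))
    rw [hsum2, hm, smul_smul, zsmul_eq_mul]
    push_cast
    ring
  -- total B sum
  have hBpart : ∃ yB ∈ LinearMap.range tr, ∑ k ∈ B, t k = (l : ℤ) • yB := by
    choose f hf1 hf2 using horbit
    refine ⟨∑ q ∈ (B.image (Quotient.mk R)).attach, f q.1 q.2,
      Submodule.sum_mem _ (fun q _ => hf1 q.1 q.2), ?_⟩
    rw [Finset.sum_partition R, ← Finset.sum_attach (B.image (Quotient.mk R)), Finset.smul_sum]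
    exact Finset.sum_congr rfl fun q _ => hf2 q.1 q.2
  -- Wilson's theorem
  have hwil : l ∣ Nat.factorial (l - 1) + 1 := by
    have h1 : ((Nat.factorial (l - 1) : ZMod l)) = -1 := ZMod.wilsons_lemma l
    have h2 : ((Nat.factorial (l - 1) + 1 : ℕ) : ZMod l) = 0 := by push_cast [h1]; ring
    exact (ZMod.natCast_eq_zero_iff _ _).mp h2
  obtain ⟨w, hw⟩ := hwil
  have hfacl : Nat.factorial l + l = l * (l * w) := by
    have h3 : l * (Nat.factorial (l - 1) + 1) = Nat.factorial l + l := by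
      rw [Nat.mul_add, Nat.mul_one, Nat.mul_factorial_pred hl.ne_zero]
    rw [← h3, hw]
  -- H ones is fixed by σ
  have hσfix : σ (H ones) = H ones := by
    have hval1 : (1 : ZMod l).val = 1 := ZMod.val_one l
    have h1 : H (shift 1 ones) = (σ ^ (1 : ZMod l).val) (H ones) := hHshift 1 ones
    have h2 : shift (1 : ZMod l) ones = ones := rfl
    rw [h2, hval1, pow_one] at h1
    exact h1.symm
  have hPfix : ∀ i : ℕ, (σ ^ i) (H ones) = H ones := by
    intro i
    induction i with
    | zero => rfl
    | succ n ih => rw [pow_succ, MulAut.mul_apply, hσfix, ih]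
  have htrP : tr (of ℤ G (H ones)) = (l : ℤ) • of ℤ G (H ones) := by
    rw [htr]
    rw [Finset.sum_congr rfl fun i _ => by rw [hPfix i]]
    rw [Finset.sum_const, Finset.card_range, natCast_zsmul]
  -- assembly
  obtain ⟨yB, hyB, hBeq⟩ := hBpart
  refine ⟨(w : ℤ) • tr (of ℤ G (H ones)) + yB,
    Submodule.add_mem _ (Submodule.smul_mem _ _ (LinearMap.mem_range_self tr _)) hyB, ?_⟩
  have hones_piece : t ones + (l : ℤ) • of ℤ G (∏ i ∈ Finset.range l, (σ ^ i) g)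
      = (l : ℤ) • ((w : ℤ) • tr (of ℤ G (H ones))) := by
    rw [ht]
    simp only
    rw [hmones, hHones.symm, htrP, smul_smul, smul_smul, zsmul_eq_mul, zsmul_eq_mul]
    have : ((Nat.factorial l : MonoidAlgebra ℤ G)) * of ℤ G (H ones)
        + (((l : ℤ) : MonoidAlgebra ℤ G)) * of ℤ G (H ones)
        = (((Nat.factorial l + l : ℕ) : MonoidAlgebra ℤ G)) * of ℤ G (H ones) := by
      push_cast
      ring
    rw [this, hfacl]
    push_cast
    ring
  rw [hexp, hsplit, hCpart]
  rw [smul_add]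
  rw [← hBeq, ← hones_piece]
  ring
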